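/- The number of permutations w in S_{2n+1} whose ascent/descent vector is a ballot sequence (i.e., every initial segment has at least as many ascents as descents) equals A(n,2n+1)/(n+1), where A(n,2n+1) is the central Eulerian number. -/

import Mathlib

open scoped Classical

/-- Number of descents of `w` occurring among the first `ℓ` positions
(0-indexed: position `i` is a descent if `w i > w (i+1)`). -/
noncomputable def descentsIn {N : ℕ} (w : Equiv.Perm (Fin N)) (ℓ : ℕ) : ℕ :=
  ((Finset.range ℓ).filter (fun i =>
    ∃ h : i + 1 < N, w ⟨i + 1, h⟩ < w ⟨i, Nat.lt_of_succ_lt h⟩)).card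

/-- Total number of descents of a permutation of `[N]`. -/
noncomputable def descents {N : ℕ} (w : Equiv.Perm (Fin N)) : ℕ :=
  descentsIn w (N - 1)

/-- The Eulerian number `A(m, N)`: the number of permutations of `[N]`
with exactly `m` descents. -/
noncomputable def eulerian (m N : ℕ) : ℕ :=
  (Finset.univ.filter (fun w : Equiv.Perm (Fin N) => descents w = m)).card


/-- A permutation `w ∈ S_{2n+1}` is a Dyck permutation if its ascent/descent
vector is a ballot sequence: every initial segment has at least as many
ascents (0's) as descents (1's); equivalently its lattice path ends at `(n,n)`
(i.e. `w` has exactly `n` descents, as noted in the source) and never goes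
above the diagonal. -/
noncomputable def IsDyckPerm (n : ℕ) (w : Equiv.Perm (Fin (2 * n + 1))) : Prop :=
  descents w = n ∧ ∀ ℓ ≤ 2 * n, descentsIn w ℓ ≤ ℓ - descentsIn w ℓ

namespace EC
open Finset
open Fin.NatCast Fin.CommRing

variable {n : ℕ}

noncomputable def gval (w : Equiv.Perm (Fin (2*n+1))) (i : Fin (2*n+1)) : ℤ :=
  if w (i+1) < w i then -1 else 1

noncomputable def fv (w : Equiv.Perm (Fin (2*n+1))) (m : ℕ) : ℤ :=
  gval w (m : Fin (2*n+1))

noncomputable def P (w : Equiv.Perm (Fin (2*n+1))) (k : ℕ) : ℤ :=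
  ∑ i ∈ Finset.range k, fv w i

lemma gval_eq_one_or (w : Equiv.Perm (Fin (2*n+1))) (i : Fin (2*n+1)) :
    gval w i = 1 ∨ gval w i = -1 := by
  unfold gval; split_ifs <;> simp

lemma fv_eq (w : Equiv.Perm (Fin (2*n+1))) (m : ℕ) : fv w m = 1 ∨ fv w m = -1 :=
  gval_eq_one_or w _

lemma fv_period (w : Equiv.Perm (Fin (2*n+1))) (m : ℕ) :
    fv w (m + (2*n+1)) = fv w m := by
  unfold fv; congr 1
  simp [Nat.cast_add, Fin.natCast_self]

lemma P_zero (w : Equiv.Perm (Fin (2*n+1))) : P w 0 = 0 := by simp [P]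

lemma P_succ (w : Equiv.Perm (Fin (2*n+1))) (k : ℕ) :
    P w (k+1) = P w k + fv w k := Finset.sum_range_succ _ _

lemma P_period (w : Equiv.Perm (Fin (2*n+1))) (m : ℕ) :
    P w (m + (2*n+1)) = P w m + P w (2*n+1) := by
  induction m with
  | zero => simp [P_zero]
  | succ m ih =>
    have h1 : m + 1 + (2*n+1) = (m + (2*n+1)) + 1 := by ring
    rw [h1, P_succ, ih, fv_period, P_succ w m]
    ring

noncomputable def rot (j : Fin (2*n+1)) (w : Equiv.Perm (Fin (2*n+1))) :
    Equiv.Perm (Fin (2*n+1)) := (Equiv.addRight j).trans w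

lemma rot_apply (j : Fin (2*n+1)) (w : Equiv.Perm (Fin (2*n+1))) (i : Fin (2*n+1)) :
    rot j w i = w (i + j) := rfl

lemma rot_rot (j k : Fin (2*n+1)) (w : Equiv.Perm (Fin (2*n+1))) :
    rot j (rot k w) = rot (k + j) w := by
  apply Equiv.ext; intro i
  simp only [rot_apply]
  congr 1; ring

lemma rot_zero (w : Equiv.Perm (Fin (2*n+1))) : rot 0 w = w := by
  apply Equiv.ext; intro i
  simp [rot_apply]

lemma rot_left_inj {j j' : Fin (2*n+1)} {w : Equiv.Perm (Fin (2*n+1))}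
    (h : rot j w = rot j' w) : j = j' := by
  have := congrArg (fun v : Equiv.Perm (Fin (2*n+1)) => v 0) h
  simp only [rot_apply, zero_add] at this
  exact w.injective this


lemma descentsIn_le {N : ℕ} (v : Equiv.Perm (Fin N)) (ℓ : ℕ) : descentsIn v ℓ ≤ ℓ := by
  unfold descentsIn
  exact (Finset.card_filter_le _ _).trans (Finset.card_range ℓ).le

lemma descentsIn_succ {N : ℕ} (v : Equiv.Perm (Fin N)) (ℓ : ℕ) (h : ℓ + 1 < N) :
    descentsIn v (ℓ+1) =
      descentsIn v ℓ + if v ⟨ℓ+1, h⟩ < v ⟨ℓ, Nat.lt_of_succ_lt h⟩ then 1 else 0 := by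
  unfold descentsIn
  rw [Finset.range_add_one, Finset.filter_insert]
  by_cases hc : v ⟨ℓ+1, h⟩ < v ⟨ℓ, Nat.lt_of_succ_lt h⟩
  · rw [if_pos ⟨h, hc⟩, if_pos hc, Finset.card_insert_of_notMem, Nat.add_comm]
    intro hm
    exact absurd (Finset.mem_of_mem_filter _ hm) (by simp)
  · rw [if_neg, if_neg hc, Nat.add_zero]
    rintro ⟨h', hc'⟩
    exact hc hc'

lemma fv_rot (w : Equiv.Perm (Fin (2*n+1))) (j : Fin (2*n+1)) (ℓ : ℕ) (h : ℓ + 1 < 2*n+1) :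
    fv w (j.val + ℓ) =
      if (rot j w) ⟨ℓ+1, h⟩ < (rot j w) ⟨ℓ, Nat.lt_of_succ_lt h⟩ then -1 else 1 := by
  have hℓ : ℓ < 2*n+1 := Nat.lt_of_succ_lt h
  have c0 : ((ℓ : ℕ) : Fin (2*n+1)) = ⟨ℓ, hℓ⟩ := Fin.ext (Fin.val_cast_of_lt hℓ)
  have c1 : ((ℓ + 1 : ℕ) : Fin (2*n+1)) = ⟨ℓ+1, h⟩ := Fin.ext (Fin.val_cast_of_lt h)
  have e0 : ((j.val + ℓ : ℕ) : Fin (2*n+1)) = ⟨ℓ, hℓ⟩ + j := by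
    rw [Nat.cast_add, Fin.cast_val_eq_self, ← c0]
    exact add_comm _ _
  have e1 : ((j.val + ℓ : ℕ) : Fin (2*n+1)) + 1 = ⟨ℓ+1, h⟩ + j := by
    rw [e0, ← c1, ← c0, Nat.cast_add, Nat.cast_one]
    ring
  show gval w _ = _
  unfold gval
  rw [e1, e0]
  rfl

lemma P_rot (w : Equiv.Perm (Fin (2*n+1))) (j : Fin (2*n+1)) :
    ∀ ℓ, ℓ ≤ 2*n →
      P w (j.val + ℓ) = P w j.val + ℓ - 2 * (descentsIn (rot j w) ℓ : ℤ) := by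
  intro ℓ
  induction ℓ with
  | zero => intro _; simp [descentsIn]
  | succ ℓ ih =>
    intro hℓ
    have hℓ' : ℓ ≤ 2*n := by omega
    have h1 : ℓ + 1 < 2*n+1 := by omega
    have e := fv_rot w j ℓ h1
    have hadd : j.val + (ℓ+1) = (j.val + ℓ) + 1 := by ring
    rw [hadd, P_succ, ih hℓ', descentsIn_succ (rot j w) ℓ h1]
    split_ifs at e ⊢ with hc
    · rw [e]; push_cast; ring
    · rw [e]; push_cast; ring

lemma descents_rot_eq (w : Equiv.Perm (Fin (2*n+1))) (j : Fin (2*n+1)) :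
    descents (rot j w) = descentsIn (rot j w) (2*n) := by
  unfold descents; congr 1

lemma descents_rot_iff (w : Equiv.Perm (Fin (2*n+1))) (j : Fin (2*n+1)) :
    descents (rot j w) = n ↔ P w (j.val + 2*n) = P w j.val := by
  rw [descents_rot_eq]
  have h := P_rot w j (2*n) le_rfl
  have h2 := descentsIn_le (rot j w) (2*n)
  constructor
  · intro hd; rw [hd] at h; omega
  · intro hp; rw [hp] at h; omega

lemma ballot_rot_iff (w : Equiv.Perm (Fin (2*n+1))) (j : Fin (2*n+1)) :
    (∀ ℓ ≤ 2*n, descentsIn (rot j w) ℓ ≤ ℓ - descentsIn (rot j w) ℓ) ↔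
      (∀ ℓ ≤ 2*n, P w j.val ≤ P w (j.val + ℓ)) := by
  refine forall₂_congr (fun ℓ hℓ => ?_)
  have h := P_rot w j ℓ hℓ
  have h2 := descentsIn_le (rot j w) ℓ
  constructor <;> intro <;> omega

lemma isDyck_rot_iff (w : Equiv.Perm (Fin (2*n+1))) (j : Fin (2*n+1)) :
    IsDyckPerm n (rot j w) ↔
      (P w (j.val + 2*n) = P w j.val ∧ ∀ ℓ ≤ 2*n, P w j.val ≤ P w (j.val + ℓ)) := by
  unfold IsDyckPerm
  exact and_congr (descents_rot_iff w j) (ballot_rot_iff w j)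

lemma P_two_n (w : Equiv.Perm (Fin (2*n+1))) (hw : descents w = n) : P w (2*n) = 0 := by
  have h0 : descents (rot (0 : Fin (2*n+1)) w) = n := by rw [rot_zero]; exact hw
  have h := (descents_rot_iff w 0).mp h0
  simpa [P_zero] using h


lemma cycle_neg (N : ℕ) (hN : 0 < N) (Q : ℕ → ℤ) (hQ : ∀ m, Q (m + N) = Q m - 1) :
    ∃! j, j < N ∧ ∀ k, j ≤ k → k < j + N → Q j ≤ Q k := by
  have hne : (Finset.range N).Nonempty := ⟨0, Finset.mem_range.mpr hN⟩
  set μ := (Finset.range N).inf' hne Q with hμ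
  obtain ⟨j0, hj0mem, hj0⟩ := Finset.exists_mem_eq_inf' hne Q
  set t := (Finset.range N).filter (fun r => Q r = μ) with ht
  have htne : t.Nonempty := ⟨j0, Finset.mem_filter.mpr ⟨hj0mem, hj0.symm⟩⟩
  set j := t.min' htne with hj
  have hjt : j ∈ t := Finset.min'_mem _ _
  have hjN : j < N := Finset.mem_range.mp (Finset.mem_filter.mp hjt).1
  have hQj : Q j = μ := (Finset.mem_filter.mp hjt).2
  have hmin : ∀ r, r < N → μ ≤ Q r := fun r hr => Finset.inf'_le _ (Finset.mem_range.mpr hr)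
  have hfirst : ∀ r, r < j → μ + 1 ≤ Q r := by
    intro r hr
    have hrN : r < N := hr.trans hjN
    have h1 : μ ≤ Q r := hmin r hrN
    have h2 : Q r ≠ μ := by
      intro he
      have := Finset.min'_le t r (Finset.mem_filter.mpr ⟨Finset.mem_range.mpr hrN, he⟩)
      omega
    omega
  refine ⟨j, ⟨hjN, ?_⟩, ?_⟩
  · intro k hk1 hk2
    by_cases hkN : k < N
    · rw [hQj]; exact hmin k hkN
    · have hr : k - N < j := by omega
      have he : Q k = Q (k - N) - 1 := by
        have hk : k = (k - N) + N := by omega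
        have h5 := hQ (k - N)
        rwa [← hk] at h5
      have := hfirst _ hr
      omega
  · rintro j' ⟨hj'N, hcond⟩
    rcases lt_trichotomy j' j with hlt | heq | hgt
    · have h1 := hcond j (le_of_lt hlt) (by omega)
      have h2 : μ ≤ Q j' := hmin _ hj'N
      have h3 : Q j' = μ := by omega
      have := Finset.min'_le t j' (Finset.mem_filter.mpr ⟨Finset.mem_range.mpr hj'N, h3⟩)
      omega
    · exact heq
    · exfalso
      have h1 := hcond (j + N) (by omega) (by omega)
      have h2 : Q (j + N) = μ - 1 := by rw [hQ, hQj]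
      have h3 : μ ≤ Q j' := hmin _ hj'N
      omega

lemma cycle_pos (N : ℕ) (hN : 0 < N) (Q : ℕ → ℤ) (hQ : ∀ m, Q (m + N) = Q m + 1) :
    ∃! j, j < N ∧ ∀ k, j < k → k ≤ j + N → Q j + 1 ≤ Q k := by
  have hne : (Finset.range N).Nonempty := ⟨0, Finset.mem_range.mpr hN⟩
  set μ := (Finset.range N).inf' hne Q with hμ
  obtain ⟨j0, hj0mem, hj0⟩ := Finset.exists_mem_eq_inf' hne Q
  set t := (Finset.range N).filter (fun r => Q r = μ) with ht
  have htne : t.Nonempty := ⟨j0, Finset.mem_filter.mpr ⟨hj0mem, hj0.symm⟩⟩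
  set j := t.max' htne with hj
  have hjt : j ∈ t := Finset.max'_mem _ _
  have hjN : j < N := Finset.mem_range.mp (Finset.mem_filter.mp hjt).1
  have hQj : Q j = μ := (Finset.mem_filter.mp hjt).2
  have hmin : ∀ r, r < N → μ ≤ Q r := fun r hr => Finset.inf'_le _ (Finset.mem_range.mpr hr)
  have hlast : ∀ r, j < r → r < N → μ + 1 ≤ Q r := by
    intro r hr hrN
    have h1 : μ ≤ Q r := hmin r hrN
    have h2 : Q r ≠ μ := by
      intro he
      have := Finset.le_max' t r (Finset.mem_filter.mpr ⟨Finset.mem_range.mpr hrN, he⟩)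
      omega
    omega
  refine ⟨j, ⟨hjN, ?_⟩, ?_⟩
  · intro k hk1 hk2
    by_cases hkN : k < N
    · rw [hQj]; exact hlast k hk1 hkN
    · have hr : k - N < N := by omega
      have he : Q k = Q (k - N) + 1 := by
        have hk : k = (k - N) + N := by omega
        have h5 := hQ (k - N)
        rwa [← hk] at h5
      have := hmin _ hr
      omega
  · rintro j' ⟨hj'N, hcond⟩
    rcases lt_trichotomy j' j with hlt | heq | hgt
    · exfalso
      have h1 := hcond j hlt (by omega)
      have h2 : μ ≤ Q j' := hmin _ hj'N
      omega
    · exact heq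
    · exfalso
      have h1 := hcond (j + N) (by omega) (by omega)
      have h2 : Q (j + N) = μ + 1 := by rw [hQ, hQj]
      have h3 : μ + 1 ≤ Q j' := hlast _ hgt hj'N
      omega


lemma exists_unique_dyck (w : Equiv.Perm (Fin (2*n+1))) (hw : descents w = n) :
    ∃! j : Fin (2*n+1), IsDyckPerm n (rot j w) := by
  have hP2n : P w (2*n) = 0 := P_two_n w hw
  have hT : P w (2*n+1) = fv w (2*n) := by rw [P_succ, hP2n, zero_add]
  rcases fv_eq w (2*n) with h1 | h1
  · -- total sum is +1
    have hQ : ∀ m, P w (m + (2*n+1)) = P w m + 1 := by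
      intro m; rw [P_period, hT, h1]
    obtain ⟨a, ⟨haN, hacond⟩, hauniq⟩ := cycle_pos (2*n+1) (by omega) (P w) hQ
    have bridge : ∀ b, b < 2*n+1 →
        ((∀ k, b < k → k ≤ b + (2*n+1) → P w b + 1 ≤ P w k) ↔
          IsDyckPerm n (rot ((b : Fin (2*n+1)) + 1) w)) := by
      intro b hb
      rw [isDyck_rot_iff]
      have hcastj : ((b : Fin (2*n+1)) + 1) = ((b+1 : ℕ) : Fin (2*n+1)) := by push_cast; ring
      have hkey : ∀ ℓ, P w (((b : Fin (2*n+1)) + 1).val + ℓ) - P w (((b : Fin (2*n+1)) + 1).val)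
          = P w (b + 1 + ℓ) - P w (b+1) := by
        intro ℓ
        have hv : ((b : Fin (2*n+1)) + 1).val = (b+1) % (2*n+1) := by
          rw [hcastj, Fin.val_natCast]
        by_cases hb1 : b + 1 < 2*n+1
        · rw [hv, Nat.mod_eq_of_lt hb1]
        · have hb2 : b + 1 = 2*n+1 := by omega
          rw [hv, hb2, Nat.mod_self]
          have e1 : P w ((2*n+1) + ℓ) = P w ℓ + 1 := by
            rw [Nat.add_comm, hQ]
          have e2 : P w (2*n+1) = P w 0 + 1 := by rw [hT, h1, P_zero]; norm_num
          rw [e1, e2, Nat.zero_add]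
          ring
      set jv := ((b : Fin (2*n+1)) + 1).val with hjv
      constructor
      · intro hc
        have hfb : P w (b+1) = P w b + 1 := by
          have hps := P_succ w b
          have hge := hc (b+1) (by omega) (by omega)
          rcases fv_eq w b with h | h <;> omega
        constructor
        · have hk2n := hkey (2*n)
          have e3 : P w (b + 1 + 2*n) = P w b + 1 := by
            have e : b + 1 + 2*n = b + (2*n+1) := by ring
            rw [e, hQ]
          omega
        · intro ℓ hℓ
          have hkℓ := hkey ℓ
          have := hc (b+1+ℓ) (by omega) (by omega)
          omega
      · rintro ⟨hA, hB⟩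
        have hk2n := hkey (2*n)
        have e3 : P w (b + 1 + 2*n) = P w b + 1 := by
          have e : b + 1 + 2*n = b + (2*n+1) := by ring
          rw [e, hQ]
        have hfb : P w (b+1) = P w b + 1 := by omega
        intro k hk1 hk2
        have hkℓ := hkey (k - (b+1))
        have hBk := hB (k - (b+1)) (by omega)
        have e4 : b + 1 + (k - (b+1)) = k := by omega
        rw [e4] at hkℓ
        omega
    refine ⟨(a : Fin (2*n+1)) + 1, (bridge a haN).mp hacond, ?_⟩
    intro j₂ hj₂
    have hb2 : (j₂ - 1).val < 2*n+1 := (j₂ - 1).isLt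
    have hcast : ((((j₂ - 1).val : ℕ) : Fin (2*n+1)) + 1) = j₂ := by
      rw [Fin.cast_val_eq_self]; ring
    have hc2 := (bridge _ hb2).mpr (by rw [hcast]; exact hj₂)
    have heq := hauniq _ ⟨hb2, hc2⟩
    rw [← heq]
    exact hcast.symm
  · -- total sum is -1
    have hQ : ∀ m, P w (m + (2*n+1)) = P w m - 1 := by
      intro m; rw [P_period, hT, h1]; ring
    obtain ⟨a, ⟨haN, hacond⟩, hauniq⟩ := cycle_neg (2*n+1) (by omega) (P w) hQ
    have bridge : ∀ b, b < 2*n+1 →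
        ((∀ k, b ≤ k → k < b + (2*n+1) → P w b ≤ P w k) ↔
          IsDyckPerm n (rot ((b : Fin (2*n+1))) w)) := by
      intro b hb
      rw [isDyck_rot_iff]
      have hv : ((b : Fin (2*n+1))).val = b := Fin.val_cast_of_lt hb
      rw [hv]
      constructor
      · intro hc
        constructor
        · have hge : P w b ≤ P w (b + 2*n) := hc (b+2*n) (by omega) (by omega)
          have e1 : P w (b + (2*n+1)) = P w b - 1 := hQ b
          have e2 : P w (b + (2*n+1)) = P w (b + 2*n) + fv w (b + 2*n) := by
            have e : b + (2*n+1) = (b + 2*n) + 1 := by ring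
            rw [e, P_succ]
          rcases fv_eq w (b+2*n) with h | h <;> omega
        · intro ℓ hℓ
          exact hc (b+ℓ) (by omega) (by omega)
      · rintro ⟨hA, hB⟩
        intro k hk1 hk2
        have hBk := hB (k - b) (by omega)
        have e4 : b + (k - b) = k := by omega
        rwa [e4] at hBk
    refine ⟨(a : Fin (2*n+1)), (bridge a haN).mp hacond, ?_⟩
    intro j₂ hj₂
    have hb2 : (j₂).val < 2*n+1 := j₂.isLt
    have hcast : (((j₂).val : ℕ) : Fin (2*n+1)) = j₂ := Fin.cast_val_eq_self j₂
    have hc2 := (bridge _ hb2).mpr (by rw [hcast]; exact hj₂)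
    have heq := hauniq _ ⟨hb2, hc2⟩
    rw [← heq]
    exact hcast.symm


lemma card_descents_rot (d : Equiv.Perm (Fin (2*n+1))) (hd : IsDyckPerm n d) :
    (Finset.univ.filter fun j : Fin (2*n+1) => descents (rot j d) = n).card = n + 1 := by
  have hP2n : P d (2*n) = 0 := P_two_n d hd.1
  have hT : P d (2*n+1) = fv d (2*n) := by rw [P_succ, hP2n, zero_add]
  set c : Fin (2*n+1) := ((2*n : ℕ) : Fin (2*n+1)) with hc
  set T : ℤ := P d (2*n+1) with hTdef
  have hchar : ∀ j : Fin (2*n+1), descents (rot j d) = n ↔ gval d (j + c) = T := by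
    intro j
    rw [descents_rot_iff]
    have h1 : P d (j.val + (2*n+1)) = P d j.val + T := P_period d _
    have h2 : P d (j.val + (2*n+1)) = P d (j.val + 2*n) + fv d (j.val + 2*n) := by
      have e : j.val + (2*n+1) = (j.val + 2*n) + 1 := by ring
      rw [e, P_succ]
    have h3 : fv d (j.val + 2*n) = gval d (j + c) := by
      unfold fv; congr 1
      rw [Nat.cast_add, Fin.cast_val_eq_self]
    constructor
    · intro h; rw [← h3]; omega
    · intro h; rw [← h3] at h; omega
  have hfe : (Finset.univ.filter fun j : Fin (2*n+1) => descents (rot j d) = n)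
      = Finset.univ.filter fun j : Fin (2*n+1) => gval d (j + c) = T :=
    Finset.filter_congr (fun j _ => hchar j)
  rw [hfe]
  have hshift : (Finset.univ.filter fun j : Fin (2*n+1) => gval d (j + c) = T).card
      = (Finset.univ.filter fun i : Fin (2*n+1) => gval d i = T).card := by
    apply Finset.card_bij (fun j _ => j + c)
    · intro j hj
      simp only [Finset.mem_filter, Finset.mem_univ, true_and] at hj ⊢
      exact hj
    · intro a _ b _ h
      exact add_right_cancel h
    · intro i hi
      refine ⟨i - c, ?_, by ring⟩
      simp only [Finset.mem_filter, Finset.mem_univ, true_and] at hi ⊢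
      rwa [sub_add_cancel]
  rw [hshift]
  have hsum : ∑ i : Fin (2*n+1), gval d i = T := by
    rw [hTdef]
    have : P d (2*n+1) = ∑ i ∈ Finset.range (2*n+1), fv d i := rfl
    rw [this, ← Fin.sum_univ_eq_sum_range (fun i => fv d i) (2*n+1)]
    apply Finset.sum_congr rfl
    intro i _
    unfold fv
    rw [Fin.cast_val_eq_self]
  have hsplit := Finset.sum_filter_add_sum_filter_not (Finset.univ : Finset (Fin (2*n+1)))
      (fun i => gval d i = 1) (gval d)
  have hA : ∑ i ∈ Finset.univ.filter (fun i : Fin (2*n+1) => gval d i = 1), gval d i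
      = ((Finset.univ.filter (fun i : Fin (2*n+1) => gval d i = 1)).card : ℤ) := by
    rw [Finset.sum_congr rfl (fun i hi => (Finset.mem_filter.mp hi).2)]
    simp
  have hB : ∑ i ∈ Finset.univ.filter (fun i : Fin (2*n+1) => ¬ gval d i = 1), gval d i
      = -((Finset.univ.filter (fun i : Fin (2*n+1) => ¬ gval d i = 1)).card : ℤ) := by
    have : ∀ i ∈ Finset.univ.filter (fun i : Fin (2*n+1) => ¬ gval d i = 1),
        gval d i = -1 := by
      intro i hi
      rcases gval_eq_one_or d i with h | h
      · exact absurd h (Finset.mem_filter.mp hi).2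
      · exact h
    rw [Finset.sum_congr rfl this]
    simp
  have hcards := Finset.card_filter_add_card_filter_not
      (s := (Finset.univ : Finset (Fin (2*n+1)))) (p := fun i : Fin (2*n+1) => gval d i = 1)
  rw [Finset.card_univ, Fintype.card_fin] at hcards
  rcases fv_eq d (2*n) with h1 | h1
  · have hT1 : T = 1 := by rw [hT, h1]
    have hfilter : (Finset.univ.filter fun i : Fin (2*n+1) => gval d i = T)
        = Finset.univ.filter (fun i : Fin (2*n+1) => gval d i = 1) := by
      apply Finset.filter_congr
      intro i _
      rw [hT1]
    rw [hfilter]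
    rw [hA, hB] at hsplit
    rw [hsum] at hsplit
    omega
  · have hT1 : T = -1 := by rw [hT, h1]
    have hfilter : (Finset.univ.filter fun i : Fin (2*n+1) => gval d i = T)
        = Finset.univ.filter (fun i : Fin (2*n+1) => ¬ gval d i = 1) := by
      apply Finset.filter_congr
      intro i _
      rw [hT1]
      constructor
      · intro h hh; rw [hh] at h; norm_num at h
      · intro h
        rcases gval_eq_one_or d i with h2 | h2
        · exact absurd h2 h
        · exact h2
    rw [hfilter]
    rw [hA, hB] at hsplit
    rw [hsum] at hsplit
    omega


noncomputable def dyckRep (n : ℕ) (w : Equiv.Perm (Fin (2*n+1))) : Equiv.Perm (Fin (2*n+1)) :=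
  if h : ∃ j, IsDyckPerm n (rot j w) then rot h.choose w else w

lemma main_count (n : ℕ) :
    (Finset.univ.filter (fun w : Equiv.Perm (Fin (2*n+1)) => descents w = n)).card
      = (Finset.univ.filter (fun w : Equiv.Perm (Fin (2*n+1)) => IsDyckPerm n w)).card * (n+1) := by
  classical
  set E := (Finset.univ.filter (fun w : Equiv.Perm (Fin (2*n+1)) => descents w = n)) with hE
  set Dy := (Finset.univ.filter (fun w : Equiv.Perm (Fin (2*n+1)) => IsDyckPerm n w)) with hDy
  have hmap : ∀ w ∈ E, dyckRep n w ∈ Dy := by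
    intro w hw
    have hwn : descents w = n := (Finset.mem_filter.mp hw).2
    obtain ⟨j, hj, -⟩ := exists_unique_dyck w hwn
    have hex : ∃ j, IsDyckPerm n (rot j w) := ⟨j, hj⟩
    have hrep : dyckRep n w = rot hex.choose w := dif_pos hex
    rw [hDy, Finset.mem_filter]
    exact ⟨Finset.mem_univ _, hrep ▸ hex.choose_spec⟩
  rw [Finset.card_eq_sum_card_fiberwise hmap]
  have hfib : ∀ d ∈ Dy, (E.filter fun w => dyckRep n w = d).card = n + 1 := by
    intro d hdmem
    have hd : IsDyckPerm n d := (Finset.mem_filter.mp hdmem).2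
    have himg : E.filter (fun w => dyckRep n w = d)
        = (Finset.univ.filter fun j : Fin (2*n+1) => descents (rot j d) = n).image
            (fun j => rot j d) := by
      ext w
      simp only [hE, Finset.mem_filter, Finset.mem_image, Finset.mem_univ, true_and]
      constructor
      · rintro ⟨hwE, hgw⟩
        obtain ⟨j, hj, -⟩ := exists_unique_dyck w hwE
        have hex : ∃ j, IsDyckPerm n (rot j w) := ⟨j, hj⟩
        have hrep : dyckRep n w = rot hex.choose w := dif_pos hex
        have hback : rot (-hex.choose) d = w := by
          rw [← hgw, hrep, rot_rot]
          have hz : hex.choose + -hex.choose = 0 := by ring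
          rw [hz, rot_zero]
        refine ⟨-hex.choose, ?_, hback⟩
        rw [hback]
        exact hwE
      · rintro ⟨j, hjd, hw⟩
        have hwE : descents w = n := by rw [← hw]; exact hjd
        refine ⟨hwE, ?_⟩
        have hdw : rot (-j) w = d := by
          rw [← hw, rot_rot]
          have hz : j + -j = 0 := by ring
          rw [hz, rot_zero]
        have hex : ∃ k, IsDyckPerm n (rot k w) := ⟨-j, by rw [hdw]; exact hd⟩
        have hrep : dyckRep n w = rot hex.choose w := dif_pos hex
        obtain ⟨k, hk, hkuniq⟩ := exists_unique_dyck w hwE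
        have h1 : hex.choose = k := hkuniq _ hex.choose_spec
        have h2 : -j = k := hkuniq _ (by show IsDyckPerm n (rot (-j) w); rw [hdw]; exact hd)
        rw [hrep, h1, ← h2, hdw]
    rw [himg, Finset.card_image_of_injOn, card_descents_rot d hd]
    intro a _ b _ h
    exact rot_left_inj h
  rw [Finset.sum_congr rfl hfib, Finset.sum_const, smul_eq_mul]

end EC

/-- The number of Dyck permutations in `S_{2n+1}` is the Eulerian-Catalan
number `A(n, 2n+1)/(n+1)`. -/
theorem card_dyckPerm_eq_eulerianCatalan (n : ℕ) (hn : 1 ≤ n) :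
    (Finset.univ.filter (fun w : Equiv.Perm (Fin (2 * n + 1)) => IsDyckPerm n w)).card
      = eulerian n (2 * n + 1) / (n + 1) := by
  unfold eulerian
  rw [EC.main_count n, Nat.mul_div_cancel _ (by omega : 0 < n + 1)]
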